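/- arXiv:1108.2518 — 2 statements merged into one kernel-verified Lean document; each statement's English description precedes it below -/
import Mathlib

section
/- Two rotations r₁, r₂ in a plane crystallographic group Γ (acting faithfully, discretely, and cocompactly on ℝ² by orientation-preserving isometries) generate a finite cyclic subgroup consisting of rotations if and only if some nontrivial powers r₁^p and r₂^q commute. -/
open Matrix Real

abbrev V2 := Fin 2 → ℝ
abbrev Mat2 := Matrix (Fin 2) (Fin 2) ℝ
abbrev OG2 := Matrix.orthogonalGroup (Fin 2) ℝ

/-- The Euclidean group of the plane, as pairs `(v, R)` acting by `p ↦ R p + v`. -/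
@[ext] structure E2 where
  v : V2
  R : OG2

namespace E2

instance : Mul E2 := ⟨fun a b => ⟨a.v + (a.R : Mat2).mulVec b.v, a.R * b.R⟩⟩
instance : One E2 := ⟨⟨0, 1⟩⟩
instance : Inv E2 := ⟨fun a => ⟨-((a.R⁻¹ : OG2) : Mat2).mulVec a.v, a.R⁻¹⟩⟩

@[simp] lemma mul_v (a b : E2) : (a * b).v = a.v + (a.R : Mat2).mulVec b.v := rfl
@[simp] lemma mul_R (a b : E2) : (a * b).R = a.R * b.R := rfl
@[simp] lemma one_v : (1 : E2).v = 0 := rfl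
@[simp] lemma one_R : (1 : E2).R = 1 := rfl
@[simp] lemma inv_R (a : E2) : (a⁻¹).R = a.R⁻¹ := rfl
@[simp] lemma inv_v (a : E2) : (a⁻¹).v = -((a.R⁻¹ : OG2) : Mat2).mulVec a.v := rfl

noncomputable instance : Group E2 where
  mul_assoc a b c := by
    ext : 1
    · simp only [mul_v, mul_R, Matrix.mulVec_add, add_assoc, Matrix.mulVec_mulVec, Submonoid.coe_mul]
    · simp [mul_assoc]
  one_mul a := by ext <;> simp
  mul_one a := by ext <;> simp
  inv_mul_cancel a := by
    ext : 1
    · simp only [mul_v, inv_v, inv_R, one_v, Matrix.mulVec_mulVec, ← Submonoid.coe_mul, inv_mul_cancel,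
        Matrix.mulVec_neg, Submonoid.coe_one, Matrix.one_mulVec, neg_add_cancel]
    · simp

/-- Rotation matrix through angle `θ`. -/
noncomputable def rotM (θ : ℝ) : Mat2 := !![Real.cos θ, -Real.sin θ; Real.sin θ, Real.cos θ]

lemma rotM_mem (θ : ℝ) : rotM θ ∈ Matrix.orthogonalGroup (Fin 2) ℝ := by
  rw [Matrix.mem_orthogonalGroup_iff]
  have h := Real.sin_sq_add_cos_sq θ
  ext i j
  fin_cases i <;> fin_cases j <;>
    simp [rotM, Matrix.mul_apply, Fin.sum_univ_succ, Matrix.one_apply] <;> nlinarith [h]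

/-- Rotation through `θ` as an element of `O(2)`. -/
noncomputable def rotOG (θ : ℝ) : OG2 := ⟨rotM θ, rotM_mem θ⟩

/-- Translation by `w` as a Euclidean isometry. -/
noncomputable def transE (w : V2) : E2 := ⟨w, 1⟩

/-- Rotation about the origin through `θ` as a Euclidean isometry. -/
noncomputable def rotE (θ : ℝ) : E2 := ⟨0, rotOG θ⟩

/-- An element of the Euclidean group is a rotation (has nontrivial linear part). -/
def isRot (g : E2) : Prop := ((g.R : Mat2) ≠ 1)

/-- The subgroup of translations. -/
noncomputable def transSub : Subgroup E2 where
  carrier := {g | (g.R : Mat2) = 1}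
  one_mem' := by simp
  mul_mem' := by
    intro a b ha hb
    simp only [Set.mem_setOf_eq] at *
    simp [ha, hb]
  inv_mem' := by
    intro a ha
    simp only [Set.mem_setOf_eq] at *
    have : a.R = 1 := Subtype.ext ha
    simp [this]

/-- The crystallographic group `Γ_k`, realized inside the Euclidean group:
generated by the unit translations and the rotation through `2π/k`
(for `k = 2` both translation generators are needed). -/
noncomputable def GammaK (k : ℕ) : Subgroup E2 :=
  Subgroup.closure ({transE ![1, 0], rotE (2 * Real.pi / k)} ∪
    (if k = 2 then {transE ![0, 1]} else ∅))

/-- The standard action of the Euclidean group on the plane. -/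
noncomputable def act (g : E2) (p : V2) : V2 := (g.R : Mat2).mulVec p + g.v

end E2

namespace E2Aux
open E2

lemma act_one (p : V2) : act (1 : E2) p = p := by
  simp [act]

lemma act_mul (g h : E2) (p : V2) : act (g * h) p = act g (act h p) := by
  simp only [act, mul_R, mul_v, Submonoid.coe_mul, Matrix.mulVec_add, Matrix.mulVec_mulVec]
  abel

lemma act_pow_fix {g : E2} {c : V2} (h : act g c = c) (n : ℕ) : act (g ^ n) c = c := by
  induction n with
  | zero => simpa using act_one c
  | succ n ih => rw [pow_succ, act_mul, h, ih]

lemma so2_entries {M : Mat2} (horth : M ∈ Matrix.orthogonalGroup (Fin 2) ℝ)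
    (hdet : M.det = 1) :
    M 1 1 = M 0 0 ∧ M 0 1 = -(M 1 0) ∧ M 0 0 ^ 2 + M 1 0 ^ 2 = 1 := by
  have hMM := (Matrix.mem_orthogonalGroup_iff (Fin 2) ℝ).mp horth
  rw [Matrix.det_fin_two] at hdet
  have e00 : (M * Mᵀ) 0 0 = 1 := by rw [hMM]; simp
  have e11 : (M * Mᵀ) 1 1 = 1 := by rw [hMM]; simp
  have e01 : (M * Mᵀ) 0 1 = 0 := by rw [hMM]; simp
  simp only [Matrix.mul_apply, Fin.sum_univ_two, Matrix.star_apply, star_trivial, Matrix.transpose_apply] at e00 e11 e01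
  refine ⟨?_, ?_, ?_⟩
  · linear_combination M 0 0 * hdet + M 0 1 * e01 - M 1 1 * e00
  · linear_combination M 1 1 * e01 - M 1 0 * hdet - M 0 1 * e11
  · have hb : M 0 1 = -(M 1 0) := by
      linear_combination M 1 1 * e01 - M 1 0 * hdet - M 0 1 * e11
    linear_combination e00 + (M 1 0 - M 0 1) * hb

lemma rot_fixed_vec {M : Mat2} (horth : M ∈ Matrix.orthogonalGroup (Fin 2) ℝ)
    (hdet : M.det = 1) (hne : M ≠ 1) {d : V2} (hd : M.mulVec d = d) : d = 0 := by
  obtain ⟨h11, h01, hsq⟩ := so2_entries horth hdet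
  have e0 := congrFun hd 0
  have e1 := congrFun hd 1
  simp only [Matrix.mulVec, dotProduct, Fin.sum_univ_two] at e0 e1
  rw [h01] at e0
  rw [h11] at e1
  have hD : (M 0 0 - 1) ^ 2 + M 1 0 ^ 2 ≠ 0 := by
    intro h
    apply hne
    have ha : M 0 0 = 1 := by nlinarith [sq_nonneg (M 0 0 - 1), sq_nonneg (M 1 0)]
    have hb : M 1 0 = 0 := by nlinarith [sq_nonneg (M 0 0 - 1), sq_nonneg (M 1 0)]
    ext i j
    fin_cases i <;> fin_cases j <;>
      simp [h11, h01, ha, hb, Matrix.one_apply]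
  have hd0 : ((M 0 0 - 1) ^ 2 + M 1 0 ^ 2) * d 0 = 0 := by
    linear_combination (M 0 0 - 1) * e0 + M 1 0 * e1
  have hd1 : ((M 0 0 - 1) ^ 2 + M 1 0 ^ 2) * d 1 = 0 := by
    linear_combination (M 0 0 - 1) * e1 - M 1 0 * e0
  have hd0' : d 0 = 0 := by
    rcases mul_eq_zero.mp hd0 with h | h
    · exact absurd h hD
    · exact h
  have hd1' : d 1 = 0 := by
    rcases mul_eq_zero.mp hd1 with h | h
    · exact absurd h hD
    · exact h
  funext i
  fin_cases i <;> simp [hd0', hd1']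

lemma fix_unique (g : E2) (hdet : ((g.R : Mat2)).det = 1) (hne : (g.R : Mat2) ≠ 1)
    {c c' : V2} (hc : act g c = c) (hc' : act g c' = c') : c = c' := by
  have hsub : (g.R : Mat2).mulVec (c - c') = c - c' := by
    have := congrArg₂ (· - ·) hc hc'
    simpa [act, Matrix.mulVec_sub, add_sub_add_comm] using this
  have := rot_fixed_vec g.R.2 hdet hne hsub
  exact sub_eq_zero.mp this

lemma fix_R_one {g : E2} {c : V2} (hc : act g c = c) (hR : (g.R : Mat2) = 1) : g = 1 := by
  have hv : g.v = 0 := by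
    have := hc
    simp only [act, hR, Matrix.one_mulVec] at this
    have := congrArg (fun x => x - c) this
    simpa [add_sub_cancel_left] using this
  refine E2.ext hv ?_
  exact Subtype.ext (by simpa using hR)

lemma rot_exists_fix (g : E2) (hdet : ((g.R : Mat2)).det = 1) (hne : (g.R : Mat2) ≠ 1) :
    ∃ c : V2, act g c = c := by
  obtain ⟨h11, h01, hsq⟩ := so2_entries g.R.2 hdet
  have hD : (1 - (g.R : Mat2) 0 0) ^ 2 + ((g.R : Mat2) 1 0) ^ 2 ≠ 0 := by
    intro h
    apply hne
    have ha1 : (g.R : Mat2) 0 0 = 1 := by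
      nlinarith [sq_nonneg (1 - (g.R : Mat2) 0 0), sq_nonneg ((g.R : Mat2) 1 0)]
    have hb0 : (g.R : Mat2) 1 0 = 0 := by
      nlinarith [sq_nonneg (1 - (g.R : Mat2) 0 0), sq_nonneg ((g.R : Mat2) 1 0)]
    ext i j
    fin_cases i <;> fin_cases j <;>
      simp [h11, h01, ha1, hb0, Matrix.one_apply]
  refine ⟨![((1 - (g.R : Mat2) 0 0) * g.v 0 - (g.R : Mat2) 1 0 * g.v 1) /
      ((1 - (g.R : Mat2) 0 0) ^ 2 + ((g.R : Mat2) 1 0) ^ 2),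
    ((g.R : Mat2) 1 0 * g.v 0 + (1 - (g.R : Mat2) 0 0) * g.v 1) /
      ((1 - (g.R : Mat2) 0 0) ^ 2 + ((g.R : Mat2) 1 0) ^ 2)], ?_⟩
  funext i
  fin_cases i <;>
  · simp only [act, Matrix.mulVec, dotProduct, Fin.sum_univ_two, Pi.add_apply,
      Matrix.cons_val_zero, Matrix.cons_val_one, Matrix.head_cons, Fin.mk_zero, Fin.mk_one, h01, h11]
    field_simp
    ring

end E2Aux

open E2Aux

open E2 in
/-- **Lemma (rotscomm).** Let `Γ` be a plane crystallographic group: a subgroup of the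
orientation-preserving Euclidean group acting faithfully, properly discontinuously
(discretely) and cocompactly on `ℝ²`.  Two rotations `r₁, r₂ ∈ Γ` generate a finite
cyclic subgroup consisting of rotations if and only if some nontrivial powers
`r₁^p` and `r₂^q` commute. -/
theorem rotations_generate_finite_cyclic_iff_powers_commute
    (Γ : Subgroup E2)
    (horient : ∀ g ∈ Γ, ((g.R : Mat2)).det = 1)
    (hfaithful : ∀ g ∈ Γ, (∀ p : V2, act g p = p) → g = 1)
    (hdiscrete : ∀ K : Set V2, IsCompact K →
      {g : E2 | g ∈ Γ ∧ (act g '' K ∩ K).Nonempty}.Finite)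
    (hcocompact : ∃ K : Set V2, IsCompact K ∧ (⋃ g ∈ Γ, act g '' K) = Set.univ)
    (r₁ r₂ : E2) (h₁ : r₁ ∈ Γ) (h₂ : r₂ ∈ Γ) (hrot₁ : isRot r₁) (hrot₂ : isRot r₂) :
    (((Subgroup.closure {r₁, r₂} : Subgroup E2) : Set E2).Finite ∧
      IsCyclic (Subgroup.closure {r₁, r₂} : Subgroup E2) ∧
      (∀ g ∈ Subgroup.closure {r₁, r₂}, g ≠ 1 → isRot g)) ↔
    ∃ p q : ℕ, r₁ ^ p ≠ 1 ∧ r₂ ^ q ≠ 1 ∧ Commute (r₁ ^ p) (r₂ ^ q) := by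
  have m1 : r₁ ∈ Subgroup.closure {r₁, r₂} :=
    Subgroup.subset_closure (by simp)
  have m2 : r₂ ∈ Subgroup.closure {r₁, r₂} :=
    Subgroup.subset_closure (by simp)
  constructor
  · rintro ⟨hfin, hcyc, hrots⟩
    refine ⟨1, 1, ?_, ?_, ?_⟩
    · intro h; rw [pow_one] at h; exact hrot₁ (by simp [h])
    · intro h; rw [pow_one] at h; exact hrot₂ (by simp [h])
    · obtain ⟨x, hx⟩ := hcyc.exists_generator
      obtain ⟨m, hm⟩ := Subgroup.mem_zpowers_iff.mp (hx ⟨r₁, m1⟩)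
      obtain ⟨n, hn⟩ := Subgroup.mem_zpowers_iff.mp (hx ⟨r₂, m2⟩)
      have hcm : (⟨r₁, m1⟩ : Subgroup.closure {r₁, r₂}) * ⟨r₂, m2⟩ =
          (⟨r₂, m2⟩ : Subgroup.closure {r₁, r₂}) * ⟨r₁, m1⟩ := by
        rw [← hm, ← hn]
        exact ((Commute.refl x).zpow_zpow m n)
      have := congrArg Subtype.val hcm
      simpa [pow_one, Commute, SemiconjBy] using this
  · rintro ⟨p, q, hp, hq, hcomm⟩
    have h1p : r₁ ^ p ∈ Γ := pow_mem h₁ p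
    have h2q : r₂ ^ q ∈ Γ := pow_mem h₂ q
    obtain ⟨c₁, hc₁⟩ := rot_exists_fix r₁ (horient r₁ h₁) hrot₁
    obtain ⟨c₂, hc₂⟩ := rot_exists_fix r₂ (horient r₂ h₂) hrot₂
    have hfix1 : act (r₁ ^ p) c₁ = c₁ := act_pow_fix hc₁ p
    have hfix2 : act (r₂ ^ q) c₂ = c₂ := act_pow_fix hc₂ q
    have hR1p : (((r₁ ^ p).R : Mat2)) ≠ 1 := fun h => hp (fix_R_one hfix1 h)
    have hR2q : (((r₂ ^ q).R : Mat2)) ≠ 1 := fun h => hq (fix_R_one hfix2 h)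
    have key : act (r₂ ^ q) c₁ = c₁ := by
      have h' : act (r₁ ^ p) (act (r₂ ^ q) c₁) = act (r₂ ^ q) c₁ := by
        rw [← act_mul, hcomm, act_mul, hfix1]
      exact fix_unique (r₁ ^ p) (horient _ h1p) hR1p h' hfix1
    have hc12 : c₂ = c₁ := fix_unique (r₂ ^ q) (horient _ h2q) hR2q hfix2 key
    have hc₂' : act r₂ c₁ = c₁ := by rw [← hc12]; exact hc₂
    -- the stabilizer of c₁
    let S : Subgroup E2 :=
      { carrier := {g : E2 | act g c₁ = c₁}
        one_mem' := act_one c₁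
        mul_mem' := by
          intro a b ha hb
          simp only [Set.mem_setOf_eq] at *
          rw [act_mul, hb, ha]
        inv_mem' := by
          intro a ha
          simp only [Set.mem_setOf_eq] at *
          conv_lhs => rw [← ha, ← act_mul, inv_mul_cancel, act_one] }
    have hle : Subgroup.closure {r₁, r₂} ≤ S := by
      rw [Subgroup.closure_le]
      rintro g (rfl | rfl)
      · exact hc₁
      · exact hc₂'
    have hleΓ : Subgroup.closure {r₁, r₂} ≤ Γ := by
      rw [Subgroup.closure_le]
      rintro g (rfl | rfl) <;> assumption
    have hfinset := hdiscrete {c₁} isCompact_singleton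
    have hfin : ((Subgroup.closure {r₁, r₂} : Subgroup E2) : Set E2).Finite := by
      refine hfinset.subset ?_
      intro g hg
      exact ⟨hleΓ hg, ⟨c₁, Set.mem_inter ⟨c₁, rfl, hle hg⟩ rfl⟩⟩
    haveI hfintype : Finite (Subgroup.closure {r₁, r₂} : Subgroup E2) := hfin.to_subtype
    refine ⟨hfin, ?_, ?_⟩
    · -- cyclic: embed into ℂ via the rotation part
      have hform : ∀ g : E2, g ∈ Γ →
          ((g.R : Mat2) 1 1 = (g.R : Mat2) 0 0 ∧ (g.R : Mat2) 0 1 = -((g.R : Mat2) 1 0) ∧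
            (g.R : Mat2) 0 0 ^ 2 + (g.R : Mat2) 1 0 ^ 2 = 1) :=
        fun g hg => so2_entries g.R.2 (horient g hg)
      let f : (Subgroup.closure {r₁, r₂} : Subgroup E2) →* ℂ :=
        { toFun := fun g =>
            (((g : E2).R : Mat2) 0 0 : ℂ) + (((g : E2).R : Mat2) 1 0 : ℂ) * Complex.I
          map_one' := by
            simp [Matrix.one_apply]
          map_mul' := by
            intro g h
            obtain ⟨hA1, hA2, _⟩ := hform _ (hleΓ g.2)
            obtain ⟨hB1, hB2, _⟩ := hform _ (hleΓ h.2)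
            have hR : (((g * h : Subgroup.closure {r₁, r₂}) : E2).R : Mat2) =
                ((g : E2).R : Mat2) * ((h : E2).R : Mat2) := rfl
            rw [hR]
            simp only [Matrix.mul_apply, Fin.sum_univ_two, hA1, hA2]
            rw [Complex.ext_iff]
            constructor <;> · push_cast; simp [Complex.ext_iff]; ring }
      have hinj : Function.Injective f := by
        intro g h hgh
        simp only [f, MonoidHom.coe_mk, OneHom.coe_mk, Complex.ext_iff, Complex.add_re,
          Complex.add_im, Complex.ofReal_re, Complex.ofReal_im, Complex.mul_re, Complex.mul_im,
          Complex.I_re, Complex.I_im] at hgh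
        obtain ⟨he00, he10⟩ := hgh
        obtain ⟨hA1, hA2, _⟩ := hform _ (hleΓ g.2)
        obtain ⟨hB1, hB2, _⟩ := hform _ (hleΓ h.2)
        have he00' : ((g : E2).R : Mat2) 0 0 = ((h : E2).R : Mat2) 0 0 := by
          simpa using he00
        have he10' : ((g : E2).R : Mat2) 1 0 = ((h : E2).R : Mat2) 1 0 := by
          simpa using he10
        have hRmat : ((g : E2).R : Mat2) = ((h : E2).R : Mat2) := by
          ext i j
          fin_cases i <;> fin_cases j <;>
            simp [hA1, hA2, hB1, hB2, he00', he10']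
        have hgS : act (g : E2) c₁ = c₁ := hle g.2
        have hhS : act (h : E2) c₁ = c₁ := hle h.2
        have hv : (g : E2).v = (h : E2).v := by
          have hg' := hgS
          have hh' := hhS
          simp only [act] at hg' hh'
          rw [hRmat] at hg'
          have := hg'.trans hh'.symm
          exact add_left_cancel this
        apply Subtype.ext
        exact E2.ext hv (Subtype.ext hRmat)
      exact isCyclic_of_subgroup_isDomain f hinj
    · intro g hg hne1 hR
      exact hne1 (fix_R_one (hle hg) hR)
end

section
/- Let E be a (possibly infinite) set and f a non-negative, monotone, submodular, integer-valued function on finite subsets of E with f(∅) = 0 such that f(A ∪ {x}) − f(A) ∈ {0,1} for all finite A and x ∉ A. Then the collection of finite subsets A ⊆ E with |A'| ≤ f(A') for all A' ⊆ A forms the independent sets of a matroid (of finite rank if f is bounded), with rank function given by rk(A) = max over independent subsets B ⊆ A of |B|. -/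
section Aux

variable {E : Type*} [DecidableEq E] (f : Finset E → ℤ)

theorem sgm_le_card (hzero : f ∅ = 0)
    (hunit : ∀ (A : Finset E) (x : E), x ∉ A → f (insert x A) - f A = 0 ∨
      f (insert x A) - f A = 1) :
    ∀ S : Finset E, f S ≤ S.card := by
  intro S
  induction S using Finset.induction_on with
  | empty => simp [hzero]
  | @insert a s hx ih =>
    have h := hunit s a hx
    rw [Finset.card_insert_of_notMem hx]
    push_cast
    rcases h with h | h <;> omega

theorem sgm_span (hmono : ∀ A B : Finset E, A ⊆ B → f A ≤ f B)
    (hsub : ∀ A B : Finset E, f (A ∪ B) + f (A ∩ B) ≤ f A + f B)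
    {C D : Finset E} {x : E} (hCD : C ⊆ D) (h : f (insert x C) ≤ f C) :
    f (insert x D) ≤ f D := by
  have h1 := hsub (insert x C) D
  have hu : insert x C ∪ D = insert x D := by
    ext y; simp only [Finset.mem_union, Finset.mem_insert]
    constructor
    · rintro (⟨rfl | hy⟩ | hy)
      · left; rfl
      · exact Or.inr (hCD hy)
      · exact Or.inr hy
    · rintro (rfl | hy)
      · exact Or.inl (Or.inl rfl)
      · exact Or.inr hy
  have hi : C ⊆ insert x C ∩ D := by
    intro y hy
    exact Finset.mem_inter.mpr ⟨Finset.mem_insert_of_mem hy, hCD hy⟩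
  have h2 := hmono C (insert x C ∩ D) hi
  rw [hu] at h1
  linarith

theorem sgm_span_union (hmono : ∀ A B : Finset E, A ⊆ B → f A ≤ f B)
    (hsub : ∀ A B : Finset E, f (A ∪ B) + f (A ∩ B) ≤ f A + f B)
    {C : Finset E} (T : Finset E) (h : ∀ x ∈ T, f (insert x C) ≤ f C) :
    f (C ∪ T) ≤ f C := by
  induction T using Finset.induction_on with
  | empty => simp
  | @insert a s hx ih =>
    have h1 : f (C ∪ s) ≤ f C := ih (fun x hxs => h x (Finset.mem_insert_of_mem hxs))
    have h2 : f (insert a (C ∪ s)) ≤ f (C ∪ s) :=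
      sgm_span f hmono hsub (Finset.subset_union_left) (h a (Finset.mem_insert_self a s))
    rw [Finset.union_insert]
    linarith

end Aux

/-- **Theorem (Edmonds–Rota; Pym–Perfect).**  Let `E` be a (possibly infinite) set and
`f` a non-negative, monotone, submodular, integer-valued function on finite subsets of
`E` with `f ∅ = 0` and unit increments.  Then the finite sets `A` with `|A'| ≤ f A'` for
all `A' ⊆ A` are the independent sets of a matroid: they contain `∅`, are closed under
taking subsets, and satisfy the augmentation axiom; the associated rank function is
`rk A = max {|B| : B ⊆ A independent}`, and if `f` is bounded the matroid has finite
rank. -/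
theorem submodular_gives_matroid {E : Type*} [DecidableEq E] (f : Finset E → ℤ)
    (hnonneg : ∀ A, 0 ≤ f A)
    (hzero : f ∅ = 0)
    (hmono : ∀ A B : Finset E, A ⊆ B → f A ≤ f B)
    (hsub : ∀ A B : Finset E, f (A ∪ B) + f (A ∩ B) ≤ f A + f B)
    (hunit : ∀ (A : Finset E) (x : E), x ∉ A → f (insert x A) - f A = 0 ∨
      f (insert x A) - f A = 1) :
    -- the independence system
    (∀ A' : Finset E, A' ⊆ (∅ : Finset E) → (A'.card : ℤ) ≤ f A') ∧
    (∀ A B : Finset E, B ⊆ A → (∀ A' ⊆ A, (A'.card : ℤ) ≤ f A') →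
      (∀ B' ⊆ B, (B'.card : ℤ) ≤ f B')) ∧
    -- augmentation
    (∀ A B : Finset E, (∀ A' ⊆ A, (A'.card : ℤ) ≤ f A') →
      (∀ B' ⊆ B, (B'.card : ℤ) ≤ f B') → A.card < B.card →
      ∃ x ∈ B, x ∉ A ∧ ∀ A' ⊆ insert x A, (A'.card : ℤ) ≤ f A') ∧
    -- the rank function: every independent set extends to a maximum one inside any set,
    -- and the rank is the maximum cardinality of an independent subset
    (∀ A : Finset E, ∃ B ⊆ A, (∀ B' ⊆ B, (B'.card : ℤ) ≤ f B') ∧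
      ∀ C ⊆ A, (∀ C' ⊆ C, (C'.card : ℤ) ≤ f C') → C.card ≤ B.card) ∧
    -- finite rank when `f` is bounded
    (∀ M : ℤ, (∀ A, f A ≤ M) → ∀ A : Finset E,
      (∀ A' ⊆ A, (A'.card : ℤ) ≤ f A') → (A.card : ℤ) ≤ M) := by
  classical
  refine ⟨?_, ?_, ?_, ?_, ?_⟩
  · intro A' hA'
    rw [Finset.subset_empty.mp hA']
    simp [hzero]
  · intro A B hBA hA B' hB'
    exact hA B' (hB'.trans hBA)
  · -- augmentation
    intro A B hA hB hcard
    by_contra hcon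
    push_neg at hcon
    -- every x ∈ B \ A has f (insert x A) ≤ f A
    have key : ∀ x ∈ B \ A, f (insert x A) ≤ f A := by
      intro x hx
      rw [Finset.mem_sdiff] at hx
      obtain ⟨A', hA'sub, hA'bad⟩ := hcon x hx.1 hx.2
      have hxA' : x ∈ A' := by
        by_contra hxA'
        have : A' ⊆ A := by
          intro y hy
          rcases Finset.mem_insert.mp (hA'sub hy) with rfl | h
          · exact absurd hy hxA'
          · exact h
        exact absurd (hA A' this) (not_le.mpr hA'bad)
      set C := A'.erase x with hC
      have hCA : C ⊆ A := by
        intro y hy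
        have hyx := Finset.ne_of_mem_erase hy
        rcases Finset.mem_insert.mp (hA'sub (Finset.mem_of_mem_erase hy)) with rfl | h
        · exact absurd rfl hyx
        · exact h
      have hA'eq : A' = insert x C := (Finset.insert_erase hxA').symm
      have hcardA' : (A'.card : ℤ) = C.card + 1 := by
        rw [hC, Finset.card_erase_of_mem hxA']
        have : 1 ≤ A'.card := Finset.card_pos.mpr ⟨x, hxA'⟩
        push_cast
        omega
      have hfC : (C.card : ℤ) ≤ f C := hA C hCA
      have : f (insert x C) ≤ f C := by
        rw [← hA'eq]
        omega
      exact sgm_span f hmono hsub hCA this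
    have h1 : f (A ∪ (B \ A)) ≤ f A := sgm_span_union f hmono hsub _ key
    have h2 : B ⊆ A ∪ (B \ A) := by
      intro y hy
      by_cases hyA : y ∈ A
      · exact Finset.mem_union_left _ hyA
      · exact Finset.mem_union_right _ (Finset.mem_sdiff.mpr ⟨hy, hyA⟩)
    have h3 : (B.card : ℤ) ≤ f B := hB B le_rfl
    have h4 : f A ≤ A.card := sgm_le_card f hzero hunit A
    have h5 : f B ≤ f (A ∪ (B \ A)) := hmono _ _ h2
    have : (B.card : ℤ) ≤ A.card := by linarith
    exact absurd hcard (by exact_mod_cast not_lt.mpr (by exact_mod_cast this))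
  · -- rank
    intro A
    set S := A.powerset.filter (fun B => ∀ B' ⊆ B, (B'.card : ℤ) ≤ f B') with hS
    have hSne : S.Nonempty := by
      refine ⟨∅, ?_⟩
      rw [hS, Finset.mem_filter]
      refine ⟨Finset.empty_mem_powerset A, ?_⟩
      intro B' hB'
      rw [Finset.subset_empty.mp hB']
      simp [hzero]
    obtain ⟨B, hBS, hBmax⟩ := S.exists_max_image Finset.card hSne
    rw [hS, Finset.mem_filter, Finset.mem_powerset] at hBS
    refine ⟨B, hBS.1, hBS.2, ?_⟩
    intro C hC hCind
    exact hBmax C (by rw [hS, Finset.mem_filter, Finset.mem_powerset]; exact ⟨hC, hCind⟩)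
  · intro M hM A hA
    exact (hA A le_rfl).trans (hM A)
end
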